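/- Let V₀, W₀, β₀, V, W, α, β as above, and suppose g ∈ V, h ∈ W satisfy (1 - α⁻¹)g = (1 - αβ)h. Then for all integers m < n: α^{-m} q_m(g) - α^{-n} q_n(g) = Σ_{j=m}^{n-1} α^{-j} e_j(h) + (1 - αβ)( Σ_{j=m}^{n-1} α^{-j} q_{j-1}(h) ), where e_j is the projection onto coordinate j and q_j = Σ_{i ≤ j} e_i. -/

import Mathlib

open Finsupp

/-- The shift automorphism `(α f)(n) = f (n-1)` on finitely supported functions `ℤ →₀ M`. -/
noncomputable def sh (M : Type*) [AddCommGroup M] : AddAut (ℤ →₀ M) :=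
  (Finsupp.domCongr (Equiv.addRight (1:ℤ)) : (ℤ →₀ M) ≃+ (ℤ →₀ M))

/-- The sum-of-coordinates map `E : (ℤ →₀ M) → M`. -/
noncomputable def Esum (M : Type*) [AddCommGroup M] : (ℤ →₀ M) →+ M :=
  Finsupp.liftAddHom fun _ => AddMonoidHom.id M

/-- The inclusion `φ : M → (ℤ →₀ M)` at coordinate `0`. -/
noncomputable def phi (M : Type*) [AddCommGroup M] : M →+ (ℤ →₀ M) :=
  Finsupp.singleAddHom (0:ℤ)

/-- The projection `e_i` onto coordinate `i`. -/
noncomputable def eproj (M : Type*) [AddCommGroup M] (i : ℤ) : (ℤ →₀ M) →+ (ℤ →₀ M) :=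
  (Finsupp.singleAddHom i).comp (Finsupp.applyAddHom i)

/-- `q_i = ∑_{j ≤ i} e_j` : restriction to coordinates `≤ i`. -/
noncomputable def qproj (M : Type*) [AddCommGroup M] (i : ℤ) : (ℤ →₀ M) →+ (ℤ →₀ M) :=
  Finsupp.filterAddHom (fun j => j ≤ i)

section
variable {V₀ : Type*} [AddCommGroup V₀] (W₀ : AddSubgroup V₀) (β₀ : W₀ →+ V₀)

/-- The inclusion of `W = ℤ →₀ W₀` into `V = ℤ →₀ V₀`. -/
noncomputable def iota : (ℤ →₀ W₀) →+ (ℤ →₀ V₀) :=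
  Finsupp.mapRange.addMonoidHom W₀.subtype

/-- `β : W → V`, applying `β₀` coordinatewise. -/
noncomputable def betaMap : (ℤ →₀ W₀) →+ (ℤ →₀ V₀) :=
  Finsupp.mapRange.addMonoidHom β₀

/-- `(1 - αβ) : W → V`. -/
noncomputable def oneSubAlphaBeta : (ℤ →₀ W₀) →+ (ℤ →₀ V₀) :=
  iota W₀ - ((sh V₀).toAddMonoidHom.comp (betaMap W₀ β₀))

/-- `I = (1 - αβ)(W) ⊆ V`. -/
noncomputable def Isub : AddSubgroup (ℤ →₀ V₀) :=
  (oneSubAlphaBeta W₀ β₀).range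

end

lemma sh_apply {M : Type*} [AddCommGroup M] (f : ℤ →₀ M) (a : ℤ) :
    (sh M f) a = f (a - 1) := by
  simp [sh, Finsupp.domCongr_apply, Equiv.addRight, sub_eq_add_neg]

lemma sh_inv_apply {M : Type*} [AddCommGroup M] (f : ℤ →₀ M) (a : ℤ) :
    ((-(sh M)) f) a = f (a + 1) := by
  simp [sh, AddAut.neg_def, Finsupp.domCongr_apply, Equiv.addRight]

lemma sh_zpow_apply {M : Type*} [AddCommGroup M] (k : ℤ) (f : ℤ →₀ M) (a : ℤ) :
    ((k • sh M) f) a = f (a - k) := by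
  induction k using Int.induction_on generalizing f a with
  | zero => simp
  | succ i ih =>
      rw [add_one_zsmul, AddAut.add_apply, ih, sh_apply]
      ring_nf
  | pred i ih =>
      rw [sub_one_zsmul, sub_eq_add_neg, AddAut.add_apply, ih, sh_inv_apply]
      ring_nf

lemma hyp_pt {V₀ : Type*} [AddCommGroup V₀] {W₀ : AddSubgroup V₀} {β₀ : W₀ →+ V₀}
    {g : ℤ →₀ V₀} {h : ℤ →₀ W₀}
    (hyp : g - (-(sh V₀)) g = oneSubAlphaBeta W₀ β₀ h) (b : ℤ) :
    g b - g (b + 1) = (h b : V₀) - β₀ (h (b - 1)) := by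
  have := DFunLike.congr_fun hyp b
  simpa [oneSubAlphaBeta, iota, betaMap, sh_inv_apply, sh_apply,
    show ∀ (f : ℤ →₀ V₀) (a : ℤ), ((sh V₀).symm f) a = f (a + 1) from fun f a => sh_inv_apply f a,
    Finsupp.sub_apply, Finsupp.mapRange.addMonoidHom_apply] using this

lemma step_lemma {V₀ : Type*} [AddCommGroup V₀] (W₀ : AddSubgroup V₀) (β₀ : W₀ →+ V₀)
    (g : ℤ →₀ V₀) (h : ℤ →₀ W₀)
    (hyp : g - (-(sh V₀)) g = oneSubAlphaBeta W₀ β₀ h) (k : ℤ) :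
    ((-k) • sh V₀) (qproj V₀ k g) - ((-(k+1)) • sh V₀) (qproj V₀ (k+1) g)
      = ((-k) • sh V₀) (iota W₀ (eproj W₀ k h))
        + oneSubAlphaBeta W₀ β₀ (((-k) • sh W₀) (qproj W₀ (k-1) h)) := by
  ext a
  simp only [Finsupp.sub_apply, Finsupp.add_apply, sh_zpow_apply, oneSubAlphaBeta,
    AddMonoidHom.sub_apply, AddMonoidHom.coe_comp, Function.comp_apply,
    AddEquiv.coe_toAddMonoidHom, sh_apply, qproj, Finsupp.filterAddHom, AddMonoidHom.coe_mk, ZeroHom.coe_mk,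
    Finsupp.filter_apply, iota, betaMap, Finsupp.mapRange.addMonoidHom_apply,
    Finsupp.mapRange_apply, eproj, Finsupp.singleAddHom_apply, Finsupp.applyAddHom_apply,
    Finsupp.single_apply, sub_neg_eq_add]
  split_ifs with h1 h2 h3 h4 h5 <;> try omega
  · -- a = 0
    have ha : a = 0 := by omega
    subst ha
    simp only [zero_add, AddSubgroup.coe_subtype, ZeroMemClass.coe_zero, map_zero]
    rw [show (0:ℤ) - 1 + k = k - 1 by ring, hyp_pt hyp k]
    abel
  · -- a < 0
    simp only [AddSubgroup.coe_subtype, ZeroMemClass.coe_zero, zero_add, add_zero]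
    rw [show a + (k+1) = (a+k) + 1 by ring, show a - 1 + k = (a+k) - 1 by ring,
      hyp_pt hyp (a+k)]
  · simp

/-- Summed telescoping identity for m < n. -/
theorem stmt7 {V₀ : Type*} [AddCommGroup V₀] (W₀ : AddSubgroup V₀) (β₀ : W₀ →+ V₀)
    (g : ℤ →₀ V₀) (h : ℤ →₀ W₀)
    (hyp : g - (-(sh V₀)) g = oneSubAlphaBeta W₀ β₀ h)
    (m n : ℤ) (hmn : m < n) :
    ((-m) • sh V₀) (qproj V₀ m g) - ((-n) • sh V₀) (qproj V₀ n g)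
      = (∑ j ∈ Finset.Ico m n, ((-j) • sh V₀) (iota W₀ (eproj W₀ j h)))
        + oneSubAlphaBeta W₀ β₀
            (∑ j ∈ Finset.Ico m n, ((-j) • sh W₀) (qproj W₀ (j-1) h)) := by
  have hmn' : m + 1 ≤ n := hmn
  clear hmn
  refine Int.le_induction (motive := fun k _ =>
    ((-m) • sh V₀) (qproj V₀ m g) - ((-k) • sh V₀) (qproj V₀ k g)
      = (∑ j ∈ Finset.Ico m k, ((-j) • sh V₀) (iota W₀ (eproj W₀ j h)))
        + oneSubAlphaBeta W₀ β₀
            (∑ j ∈ Finset.Ico m k, ((-j) • sh W₀) (qproj W₀ (j-1) h))) ?_ ?_ n hmn'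
  · beta_reduce
    have hico : Finset.Ico m (m+1) = {m} := by
      ext x; simp; omega
    rw [hico, Finset.sum_singleton, Finset.sum_singleton]
    exact step_lemma W₀ β₀ g h hyp m
  · intro n hn ih
    beta_reduce at ih ⊢
    have hins : Finset.Ico m (n+1) = insert n (Finset.Ico m n) := by
      ext x; simp; omega
    have hnot : n ∉ Finset.Ico m n := by simp
    rw [hins, Finset.sum_insert hnot, Finset.sum_insert hnot, map_add]
    have key : ((-m) • sh V₀) (qproj V₀ m g) - ((-(n+1)) • sh V₀) (qproj V₀ (n+1) g)
        = (((-m) • sh V₀) (qproj V₀ m g) - ((-n) • sh V₀) (qproj V₀ n g))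
          + (((-n) • sh V₀) (qproj V₀ n g) - ((-(n+1)) • sh V₀) (qproj V₀ (n+1) g)) := by
      abel
    rw [key, ih, step_lemma W₀ β₀ g h hyp n]
    abel
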